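/- The hyperspace CL(D) of a countably infinite discrete space D, with the Vietoris topology, contains a closed subspace homeomorphic to the Sorgenfrey plane 𝕊², where 𝕊 is the Sorgenfrey line. More generally, it contains a closed copy of 𝕊ⁿ for each natural number n ≥ 1. -/

import Mathlib

open Set TopologicalSpace

/-- The hyperspace of nonempty closed subsets of `X`. -/
def CL (X : Type*) [TopologicalSpace X] : Type _ :=
  {A : Set X // A.Nonempty ∧ IsClosed A}

/-- The Vietoris topology on `CL X`. -/
instance CL.instTopologicalSpace (X : Type*) [TopologicalSpace X] :
    TopologicalSpace (CL X) :=
  .generateFrom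
    ({S | ∃ U : Set X, IsOpen U ∧ S = {K : CL X | K.1 ⊆ U}} ∪
     {S | ∃ U : Set X, IsOpen U ∧ S = {K : CL X | (K.1 ∩ U).Nonempty}})

/-- The Sorgenfrey line: `ℝ` with the lower-limit topology. -/
def SorgLine : Type := ℝ

instance : TopologicalSpace SorgLine :=
  .generateFrom {S | ∃ a b : ℝ, S = Set.Ico a b}

abbrev toSorg (s : Set ℝ) : Set SorgLine := s

lemma sorg_Ico (a b : ℝ) : IsOpen (toSorg (Set.Ico a b)) :=
  isOpen_generateFrom_of_mem ⟨a, b, rfl⟩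

lemma sorg_upper {S : Set ℝ} (h : ∀ t ∈ S, ∀ u, t ≤ u → u ∈ S) :
    IsOpen (toSorg S) := by
  have hS : S = ⋃ t ∈ S, ⋃ k : ℕ, Set.Ico t (t + k + 1) := by
    ext u
    simp only [Set.mem_iUnion, Set.mem_Ico]
    constructor
    · intro hu; exact ⟨u, hu, 0, le_refl u, by linarith⟩
    · rintro ⟨t, ht, k, h1, _⟩; exact h t ht u h1
  rw [show toSorg _ = _ from hS]
  exact isOpen_biUnion fun t _ => isOpen_iUnion fun k => sorg_Ico _ _

lemma sorg_Iio (b : ℝ) : IsOpen (toSorg (Set.Iio b)) := by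
  have hS : Set.Iio b = ⋃ k : ℕ, Set.Ico (b - (k + 1)) b := by
    ext t
    simp only [Set.mem_iUnion, Set.mem_Ico, Set.mem_Iio]
    constructor
    · intro ht
      obtain ⟨k, hk⟩ := exists_nat_ge (b - t)
      exact ⟨k, by linarith, ht⟩
    · rintro ⟨k, _, h2⟩; exact h2
  rw [show toSorg _ = _ from hS]
  exact isOpen_iUnion fun k => sorg_Ico _ _

lemma sorg_ceil (P : ℤ → Prop) : IsOpen (toSorg {t : ℝ | P ⌈-t⌉}) := by
  have hS : {t : ℝ | P ⌈-t⌉} = ⋃ m ∈ {m : ℤ | P m}, Set.Ico (-(m : ℝ)) (1 - m) := by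
    ext t
    simp only [Set.mem_iUnion, Set.mem_Ico, Set.mem_setOf_eq]
    constructor
    · intro ht
      refine ⟨⌈-t⌉, ht, ?_, ?_⟩
      · have := Int.le_ceil (-t); linarith
      · have := Int.ceil_lt_add_one (-t); linarith
    · rintro ⟨m, hm, h1, h2⟩
      have : ⌈-t⌉ = m := Int.ceil_eq_iff.2 ⟨by linarith, by linarith⟩
      rwa [this]
  rw [show toSorg _ = _ from hS]
  exact isOpen_biUnion fun m _ => sorg_Ico _ _

section Vietoris

variable {D : Type*} [TopologicalSpace D] [DiscreteTopology D]

lemma vOpen_sub (U : Set D) : IsOpen {K : CL D | K.1 ⊆ U} :=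
  isOpen_generateFrom_of_mem (Or.inl ⟨U, isOpen_discrete U, rfl⟩)

lemma vOpen_meet (U : Set D) : IsOpen {K : CL D | (K.1 ∩ U).Nonempty} :=
  isOpen_generateFrom_of_mem (Or.inr ⟨U, isOpen_discrete U, rfl⟩)

lemma vOpen_mem (d : D) : IsOpen {K : CL D | d ∈ K.1} := by
  have : {K : CL D | d ∈ K.1} = {K : CL D | (K.1 ∩ {d}).Nonempty} := by
    ext K; simp [Set.inter_singleton_nonempty]
  rw [this]; exact vOpen_meet {d}

end Vietoris

section Main

set_option linter.unusedSectionVars false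

variable {D : Type*} [TopologicalSpace D] [DiscreteTopology D] {n : ℕ} [NeZero n]

/-- The subset of `D` encoding the point `x` of the Sorgenfrey power. -/
def Aset (e : D ≃ Fin n × (ℚ ⊕ ℤ)) (x : Fin n → ℝ) : Set D :=
  {d | Sum.elim (fun q : ℚ => (q : ℝ) < -(x (e d).1))
      (fun m : ℤ => m = ⌈-(x (e d).1)⌉) (e d).2}

variable (e : D ≃ Fin n × (ℚ ⊕ ℤ))

lemma mem_Aset_inl (x : Fin n → ℝ) (i : Fin n) (q : ℚ) :
    e.symm (i, Sum.inl q) ∈ Aset e x ↔ (q : ℝ) < -(x i) := by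
  simp [Aset]

lemma mem_Aset_inr (x : Fin n → ℝ) (i : Fin n) (m : ℤ) :
    e.symm (i, Sum.inr m) ∈ Aset e x ↔ m = ⌈-(x i)⌉ := by
  simp [Aset]

/-- The embedding of the Sorgenfrey power into the hyperspace. -/
def Phi (x : Fin n → ℝ) : CL D :=
  ⟨Aset e x, ⟨e.symm (0, Sum.inr ⌈-(x 0)⌉), (mem_Aset_inr e x 0 _).2 rfl⟩,
    isClosed_discrete _⟩

lemma Phi_val (x : Fin n → ℝ) : (Phi e x).1 = Aset e x := rfl

lemma Phi_injective : Function.Injective (Phi e) := by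
  intro x y h
  have hA : Aset e x = Aset e y := by
    rw [← Phi_val e x, ← Phi_val e y, h]
  funext i
  by_contra hne
  rcases lt_or_gt_of_ne hne with hlt | hlt
  · obtain ⟨q, h1, h2⟩ := exists_rat_btwn (neg_lt_neg hlt)
    have := (mem_Aset_inl e x i q).2 h2
    rw [hA] at this
    exact absurd ((mem_Aset_inl e y i q).1 this) (not_lt.2 h1.le)
  · obtain ⟨q, h1, h2⟩ := exists_rat_btwn (neg_lt_neg hlt)
    have := (mem_Aset_inl e y i q).2 h2
    rw [← hA] at this
    exact absurd ((mem_Aset_inl e x i q).1 this) (not_lt.2 h1.le)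

lemma continuous_Phi : @Continuous (Fin n → SorgLine) (CL D) _ _ (Phi e) := by
  apply continuous_generateFrom_iff.mpr
  rintro s (⟨U, -, rfl⟩ | ⟨U, -, rfl⟩)
  · -- preimage of {K | K ⊆ U}
    have hset : @Set.preimage (Fin n → SorgLine) (CL D) (Phi e) {K : CL D | K.1 ⊆ U} =
        ⋂ i : Fin n,
          ((fun x : Fin n → SorgLine => x i) ⁻¹'
              (toSorg {t : ℝ | ∀ q : ℚ, (q : ℝ) < -t → e.symm (i, Sum.inl q) ∈ U}) ∩
           (fun x : Fin n → SorgLine => x i) ⁻¹'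
              (toSorg {t : ℝ | e.symm (i, Sum.inr ⌈-t⌉) ∈ U})) := by
      ext x
      simp only [Set.mem_preimage, Set.mem_iInter, Set.mem_inter_iff, Set.mem_setOf_eq,
        Phi_val, toSorg]
      constructor
      · intro hsub i
        constructor
        · intro q hq
          exact hsub ((mem_Aset_inl e x i q).2 hq)
        · exact hsub ((mem_Aset_inr e x i _).2 rfl)
      · intro h d hd
        rcases hde : e d with ⟨i, s⟩
        have hd' : d = e.symm (i, s) := by rw [← hde]; simp
        cases s with
        | inl q =>
          rw [hd'] at hd
          exact hd' ▸ (h i).1 q ((mem_Aset_inl e x i q).1 hd)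
        | inr m =>
          rw [hd'] at hd ⊢
          have hm := (mem_Aset_inr e x i m).1 hd
          rw [hm]
          exact (h i).2
    rw [hset]
    refine isOpen_iInter_of_finite fun i => IsOpen.inter ?_ ?_
    · exact (sorg_upper (S := {t : ℝ | ∀ q : ℚ, (q : ℝ) < -t → e.symm (i, Sum.inl q) ∈ U})
        (fun t ht u htu q hq => ht q (by linarith))).preimage (continuous_apply i)
    · exact (sorg_ceil (fun m => e.symm (i, Sum.inr m) ∈ U)).preimage (continuous_apply i)
  · -- preimage of {K | (K ∩ U).Nonempty}
    have hset : @Set.preimage (Fin n → SorgLine) (CL D) (Phi e) {K : CL D | (K.1 ∩ U).Nonempty} =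
        ⋃ d ∈ U, {x : Fin n → SorgLine | d ∈ Aset e x} := by
      ext x
      simp only [Set.mem_preimage, Set.mem_iUnion, Set.mem_setOf_eq, Phi_val]
      constructor
      · rintro ⟨d, hd1, hd2⟩; exact ⟨d, hd2, hd1⟩
      · rintro ⟨d, hd2, hd1⟩; exact ⟨d, hd1, hd2⟩
    rw [hset]
    refine isOpen_biUnion fun d _ => ?_
    rcases hde : e d with ⟨i, s⟩
    have hd' : d = e.symm (i, s) := by rw [← hde]; simp
    cases s with
    | inl q =>
      have hs : {x : Fin n → SorgLine | d ∈ Aset e x} =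
          (fun x : Fin n → SorgLine => x i) ⁻¹' (toSorg (Set.Iio (-(q : ℝ)))) := by
        ext x
        simp only [Set.mem_preimage, Set.mem_setOf_eq, hd', mem_Aset_inl, toSorg, Set.mem_Iio]
        rw [mem_Aset_inl e x i q]
        change (q : ℝ) < -(show ℝ from x i) ↔ (show ℝ from x i) < -(q : ℝ)
        constructor
        · intro h; exact lt_neg.mp h
        · intro h; exact lt_neg.mp h
      rw [hs]
      exact (sorg_Iio _).preimage (continuous_apply i)
    | inr m =>
      have hs : {x : Fin n → SorgLine | d ∈ Aset e x} =
          (fun x : Fin n → SorgLine => x i) ⁻¹' (toSorg {t : ℝ | m = ⌈-t⌉}) := by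
        ext x
        simp only [Set.mem_preimage, Set.mem_setOf_eq, hd', mem_Aset_inr, toSorg]
        rw [mem_Aset_inr e x i m]
        exact Iff.rfl
      rw [hs]
      exact (sorg_ceil (fun m' => m = m')).preimage (continuous_apply i)

/-- The open set witnessing `a ≤ x i`. -/
def Ua (i : Fin n) (a : ℝ) : Set D := {d | ∀ q : ℚ, e d = (i, Sum.inl q) → (q : ℝ) < -a}

/-- The open set witnessing `x i < b`. -/
def Wb (i : Fin n) (b : ℝ) : Set D := {d | ∃ q : ℚ, e d = (i, Sum.inl q) ∧ -b < (q : ℝ)}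

lemma le_iff_subset (x : Fin n → ℝ) (i : Fin n) (a : ℝ) :
    a ≤ x i ↔ Aset e x ⊆ Ua e i a := by
  constructor
  · intro ha d hd q hq
    have hd' : d = e.symm (i, Sum.inl q) := by rw [← hq]; simp
    rw [hd'] at hd
    have := (mem_Aset_inl e x i q).1 hd
    linarith
  · intro hsub
    by_contra hlt
    push_neg at hlt
    obtain ⟨q, h1, h2⟩ := exists_rat_btwn (neg_lt_neg hlt)
    have hmem := (mem_Aset_inl e x i q).2 h2
    have := hsub hmem q (by simp)
    linarith
lemma lt_iff_meet (x : Fin n → ℝ) (i : Fin n) (b : ℝ) :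
    x i < b ↔ (Aset e x ∩ Wb e i b).Nonempty := by
  constructor
  · intro hb
    obtain ⟨q, h1, h2⟩ := exists_rat_btwn (neg_lt_neg hb)
    exact ⟨e.symm (i, Sum.inl q), (mem_Aset_inl e x i q).2 h2,
      ⟨q, by simp, h1⟩⟩
  · rintro ⟨d, hd, q, hq, hbq⟩
    have hd' : d = e.symm (i, Sum.inl q) := by rw [← hq]; simp
    rw [hd'] at hd
    have := (mem_Aset_inl e x i q).1 hd
    linarith

/-- The closed copy of the Sorgenfrey power. -/
def SorgCopy : Set (CL D) := Set.range (Phi e)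

noncomputable def PhiEquiv : (Fin n → SorgLine) ≃ SorgCopy e :=
  Equiv.ofBijective (fun x => ⟨Phi e x, Set.mem_range_self x⟩)
    ⟨fun x y h => Phi_injective e (Subtype.ext_iff.1 h),
     fun K => by obtain ⟨x, hx⟩ := K.2; exact ⟨x, Subtype.ext hx⟩⟩

lemma continuous_PhiEquiv_symm : Continuous (PhiEquiv (D := D) e).symm := by
  apply continuous_pi
  intro i
  apply continuous_generateFrom_iff.mpr
  rintro s ⟨a, b, rfl⟩
  have hs : (fun K => (PhiEquiv (D := D) e).symm K i) ⁻¹' (toSorg (Set.Ico a b)) =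
      Subtype.val ⁻¹' ({K : CL D | K.1 ⊆ Ua e i a} ∩ {K : CL D | (K.1 ∩ Wb e i b).Nonempty}) := by
    ext K
    have hK : ((PhiEquiv (D := D) e) ((PhiEquiv (D := D) e).symm K)) = K :=
      (PhiEquiv (D := D) e).apply_symm_apply K
    set x : Fin n → ℝ := (PhiEquiv (D := D) e).symm K with hxdef
    have hKval : K.1.1 = Aset e x := by
      rw [← hK]; rfl
    simp only [Set.mem_preimage, Set.mem_inter_iff, Set.mem_setOf_eq, toSorg, Set.mem_Ico,
      hKval]
    rw [← le_iff_subset e x i a, ← lt_iff_meet e x i b]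
    exact Iff.rfl
  rw [hs]
  exact ((vOpen_sub (Ua e i a)).inter (vOpen_meet (Wb e i b))).preimage continuous_subtype_val

lemma avoid_subset_compl {V : Set (CL D)} (h : ∀ x : Fin n → ℝ, Phi e x ∉ V) :
    V ⊆ (SorgCopy e)ᶜ := by
  intro K hK hKr
  obtain ⟨x, rfl⟩ := hKr
  exact h x hK

lemma closed_SorgCopy : IsClosed (SorgCopy (D := D) e) := by
  rw [← isOpen_compl_iff, isOpen_iff_forall_mem_open]
  intro A hA
  have hbad : ∃ i : Fin n, ¬ ∃ c : ℝ,
      (∀ q : ℚ, (e.symm (i, Sum.inl q) ∈ A.1 ↔ (q : ℝ) < c)) ∧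
      (∀ m : ℤ, (e.symm (i, Sum.inr m) ∈ A.1 ↔ m = ⌈c⌉)) := by
    by_contra hco
    push_neg at hco
    choose c hc using hco
    apply hA
    refine ⟨fun i => -(c i), ?_⟩
    apply Subtype.ext
    rw [Phi_val]
    ext d
    rcases hde : e d with ⟨i, s⟩
    have hd' : d = e.symm (i, s) := by rw [← hde]; simp
    cases s with
    | inl q =>
      rw [hd', mem_Aset_inl, neg_neg]
      exact ((hc i).1 q).symm
    | inr m =>
      rw [hd', mem_Aset_inr, neg_neg]
      exact ((hc i).2 m).symm
  obtain ⟨i, hibad⟩ := hbad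
  set Q : Set ℚ := {q | e.symm (i, Sum.inl q) ∈ A.1} with hQdef
  set Z : Set ℤ := {m | e.symm (i, Sum.inr m) ∈ A.1} with hZdef
  by_cases hZ1 : ∃ m, m ∈ Z
  case neg =>
    -- no marker at coordinate i
    refine ⟨{K : CL D | K.1 ⊆ {d | ∀ m : ℤ, e d ≠ (i, Sum.inr m)}},
      avoid_subset_compl e ?_, vOpen_sub _, ?_⟩
    · intro x hx
      simp only [Set.mem_setOf_eq, Phi_val] at hx
      have hmem : e.symm (i, Sum.inr ⌈-(x i)⌉) ∈ Aset e x := (mem_Aset_inr e x i _).2 rfl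
      exact hx hmem ⌈-(x i)⌉ (by simp)
    · intro d hd m hm'
      apply hZ1
      refine ⟨m, ?_⟩
      rw [hZdef]
      simp only [Set.mem_setOf_eq]
      have : d = e.symm (i, Sum.inr m) := by rw [← hm']; simp
      rwa [← this]
  case pos =>
  obtain ⟨m₀, hm₀⟩ := hZ1
  by_cases hZ2 : ∃ m ∈ Z, m ≠ m₀
  case pos =>
    -- two markers at coordinate i
    obtain ⟨m₁, hm₁, hne⟩ := hZ2
    refine ⟨{K : CL D | e.symm (i, Sum.inr m₀) ∈ K.1} ∩
        {K : CL D | e.symm (i, Sum.inr m₁) ∈ K.1},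
      avoid_subset_compl e ?_, (vOpen_mem _).inter (vOpen_mem _), hm₀, hm₁⟩
    rintro x ⟨h1, h2⟩
    simp only [Set.mem_setOf_eq, Phi_val] at h1 h2
    have e1 := (mem_Aset_inr e x i m₀).1 h1
    have e2 := (mem_Aset_inr e x i m₁).1 h2
    exact hne (e2.trans e1.symm)
  case neg =>
  push_neg at hZ2
  by_cases hdc : ∀ q' : ℚ, q' ∈ Q → ∀ q : ℚ, q ≤ q' → q ∈ Q
  case neg =>
    -- not downward closed
    push_neg at hdc
    obtain ⟨q', hq', q, hqle, hqn⟩ := hdc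
    refine ⟨{K : CL D | e.symm (i, Sum.inl q') ∈ K.1} ∩
        {K : CL D | K.1 ⊆ {d | d ≠ e.symm (i, Sum.inl q)}},
      avoid_subset_compl e ?_, (vOpen_mem _).inter (vOpen_sub _), hq', ?_⟩
    · rintro x ⟨h1, h2⟩
      simp only [Set.mem_setOf_eq, Phi_val] at h1 h2
      have e1 := (mem_Aset_inl e x i q').1 h1
      have hqmem : e.symm (i, Sum.inl q) ∈ Aset e x := by
        refine (mem_Aset_inl e x i q).2 ?_
        have : (q : ℝ) ≤ (q' : ℝ) := by exact_mod_cast hqle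
        linarith
      exact h2 hqmem rfl
    · intro d hd hdq
      apply hqn
      rw [hQdef]
      simp only [Set.mem_setOf_eq]
      rwa [← hdq]
  case pos =>
  by_cases hub : ∃ B : ℚ, ∀ q ∈ Q, q ≤ B
  case neg =>
    -- Q unbounded above, hence contains a rational above m₀
    push_neg at hub
    obtain ⟨q₂, hq₂Q, hq₂⟩ := hub (m₀ : ℚ)
    refine ⟨{K : CL D | e.symm (i, Sum.inr m₀) ∈ K.1} ∩
        {K : CL D | e.symm (i, Sum.inl q₂) ∈ K.1},
      avoid_subset_compl e ?_, (vOpen_mem _).inter (vOpen_mem _), hm₀, hq₂Q⟩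
    rintro x ⟨h1, h2⟩
    simp only [Set.mem_setOf_eq, Phi_val] at h1 h2
    have e1 := (mem_Aset_inr e x i m₀).1 h1
    have e2 := (mem_Aset_inl e x i q₂).1 h2
    have h3 : -(x i) ≤ (m₀ : ℝ) := by rw [e1]; exact Int.le_ceil _
    have h4 : ((m₀ : ℚ) : ℝ) < (q₂ : ℝ) := by exact_mod_cast hq₂
    push_cast at h4
    linarith
  case pos =>
  obtain ⟨B, hB⟩ := hub
  by_cases hQne : ∃ q : ℚ, q ∈ Q
  case neg =>
    -- Q empty
    refine ⟨{K : CL D | e.symm (i, Sum.inr m₀) ∈ K.1} ∩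
        {K : CL D | K.1 ⊆ {d | ∀ q : ℚ, e d ≠ (i, Sum.inl q)}},
      avoid_subset_compl e ?_, (vOpen_mem _).inter (vOpen_sub _), hm₀, ?_⟩
    · rintro x ⟨h1, h2⟩
      simp only [Set.mem_setOf_eq, Phi_val] at h1 h2
      obtain ⟨q₅, hq₅⟩ := exists_rat_lt (-(x i))
      have hmem : e.symm (i, Sum.inl q₅) ∈ Aset e x := (mem_Aset_inl e x i q₅).2 hq₅
      exact h2 hmem q₅ (by simp)
    · intro d hd q hq
      apply hQne
      refine ⟨q, ?_⟩
      rw [hQdef]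
      simp only [Set.mem_setOf_eq]
      have : d = e.symm (i, Sum.inl q) := by rw [← hq]; simp
      rwa [← this]
  case pos =>
  by_cases hmax : ∃ q₀ ∈ Q, ∀ q ∈ Q, q ≤ q₀
  case pos =>
    -- Q has a maximum
    obtain ⟨q₀, hq₀Q, hq₀max⟩ := hmax
    refine ⟨{K : CL D | e.symm (i, Sum.inl q₀) ∈ K.1} ∩
        {K : CL D | K.1 ⊆ {d | ∀ q : ℚ, e d = (i, Sum.inl q) → q ≤ q₀}},
      avoid_subset_compl e ?_, (vOpen_mem _).inter (vOpen_sub _), hq₀Q, ?_⟩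
    · rintro x ⟨h1, h2⟩
      simp only [Set.mem_setOf_eq, Phi_val] at h1 h2
      have e1 := (mem_Aset_inl e x i q₀).1 h1
      obtain ⟨q₁, hq₁a, hq₁b⟩ := exists_rat_btwn e1
      have hmem : e.symm (i, Sum.inl q₁) ∈ Aset e x := (mem_Aset_inl e x i q₁).2 hq₁b
      have := h2 hmem q₁ (by simp)
      have : (q₁ : ℝ) ≤ (q₀ : ℝ) := by exact_mod_cast this
      linarith
    · intro d hd q hq
      have hd' : d = e.symm (i, Sum.inl q) := by rw [← hq]; simp
      rw [hd'] at hd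
      exact hq₀max q hd
  case neg =>
  -- Q nonempty, bounded, no maximum: Q = {q | q < sSup Q}
  push_neg at hmax
  obtain ⟨qw, hqw⟩ := hQne
  set c : ℝ := sSup ((fun q : ℚ => (q : ℝ)) '' Q) with hcdef
  have hbdd : BddAbove ((fun q : ℚ => (q : ℝ)) '' Q) := by
    refine ⟨(B : ℝ), ?_⟩
    rintro y ⟨q, hq, rfl⟩
    show ((q : ℚ) : ℝ) ≤ ((B : ℚ) : ℝ)
    exact_mod_cast hB q hq
  have hQne' : ((fun q : ℚ => (q : ℝ)) '' Q).Nonempty := ⟨(qw : ℝ), qw, hqw, rfl⟩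
  have hlt_c : ∀ q ∈ Q, (q : ℝ) < c := by
    intro q hq
    obtain ⟨q', hq'Q, hq'gt⟩ := hmax q hq
    have h1 : (q' : ℝ) ≤ c := le_csSup hbdd ⟨q', hq'Q, rfl⟩
    have h2 : (q : ℝ) < (q' : ℝ) := by exact_mod_cast hq'gt
    linarith
  have hmem_of_lt : ∀ q : ℚ, (q : ℝ) < c → q ∈ Q := by
    intro q hq
    obtain ⟨y, ⟨q', hq'Q, rfl⟩, hy⟩ := exists_lt_of_lt_csSup hQne' hq
    have hy' : (q : ℝ) < ((q' : ℚ) : ℝ) := hy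
    have : q ≤ q' := by exact_mod_cast hy'.le
    exact hdc q' hq'Q q this
  have hne : m₀ ≠ ⌈c⌉ := by
    intro hEq
    apply hibad
    refine ⟨c, fun q => ⟨fun h => hlt_c q h, fun h => hmem_of_lt q h⟩, fun m => ?_⟩
    constructor
    · intro h; rw [← hEq]; exact hZ2 m h
    · intro h; rw [h, ← hEq]; exact hm₀
  rcases lt_or_ge (m₀ : ℝ) c with hc1 | hc2
  · -- m₀ < c : pick a rational of Q above m₀
    obtain ⟨q₃, hq₃a, hq₃b⟩ := exists_rat_btwn hc1
    have hq₃Q : q₃ ∈ Q := hmem_of_lt q₃ hq₃b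
    refine ⟨{K : CL D | e.symm (i, Sum.inr m₀) ∈ K.1} ∩
        {K : CL D | e.symm (i, Sum.inl q₃) ∈ K.1},
      avoid_subset_compl e ?_, (vOpen_mem _).inter (vOpen_mem _), hm₀, hq₃Q⟩
    rintro x ⟨h1, h2⟩
    simp only [Set.mem_setOf_eq, Phi_val] at h1 h2
    have e1 := (mem_Aset_inr e x i m₀).1 h1
    have e2 := (mem_Aset_inl e x i q₃).1 h2
    have h3 : -(x i) ≤ (m₀ : ℝ) := by rw [e1]; exact Int.le_ceil _
    linarith
  · -- c ≤ m₀, and since m₀ ≠ ⌈c⌉ we get c ≤ m₀ - 1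
    have hceil : ⌈c⌉ ≤ m₀ := Int.ceil_le.2 hc2
    have hceil' : ⌈c⌉ ≤ m₀ - 1 := by
      rcases lt_or_eq_of_le hceil with h | h
      · omega
      · exact absurd h.symm hne
    have hcm : c ≤ (m₀ : ℝ) - 1 := by
      have h1 : c ≤ (⌈c⌉ : ℝ) := Int.le_ceil c
      have h2 : ((⌈c⌉ : ℤ) : ℝ) ≤ ((m₀ - 1 : ℤ) : ℝ) := by exact_mod_cast hceil'
      push_cast at h2
      linarith
    refine ⟨{K : CL D | e.symm (i, Sum.inr m₀) ∈ K.1} ∩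
        {K : CL D | K.1 ⊆ {d | ∀ q : ℚ, e d = (i, Sum.inl q) → (q : ℝ) < c}},
      avoid_subset_compl e ?_, (vOpen_mem _).inter (vOpen_sub _), hm₀, ?_⟩
    · rintro x ⟨h1, h2⟩
      simp only [Set.mem_setOf_eq, Phi_val] at h1 h2
      have e1 := (mem_Aset_inr e x i m₀).1 h1
      have h3 : (m₀ : ℝ) - 1 < -(x i) := by
        rw [e1]
        have := Int.ceil_lt_add_one (-(x i))
        linarith
      obtain ⟨q₄, hq₄a, hq₄b⟩ := exists_rat_btwn (lt_of_le_of_lt hcm h3)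
      have hmem : e.symm (i, Sum.inl q₄) ∈ Aset e x := (mem_Aset_inl e x i q₄).2 hq₄b
      have := h2 hmem q₄ (by simp)
      linarith
    · intro d hd q hq
      have hd' : d = e.symm (i, Sum.inl q) := by rw [← hq]; simp
      rw [hd'] at hd
      exact hlt_c q hd

end Main

/-- The Vietoris hyperspace of a countably infinite discrete space contains a
closed copy of the `n`-th power of the Sorgenfrey line for every `n ≥ 1`
(in particular a closed copy of the Sorgenfrey plane for `n = 2`). -/
theorem hyperspace_discrete_contains_closed_sorgenfrey_powers
    (D : Type*) [TopologicalSpace D] [DiscreteTopology D] [Countable D] [Infinite D] :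
    ∀ n : ℕ, 1 ≤ n → ∃ F : Set (CL D), IsClosed F ∧
      Nonempty (F ≃ₜ (Fin n → SorgLine)) := by
  intro n hn
  haveI : NeZero n := ⟨by omega⟩
  haveI hinf : Infinite (Fin n × (ℚ ⊕ ℤ)) :=
    Infinite.of_injective (fun z : ℤ => ((0 : Fin n), Sum.inr z))
      (fun a b h => by simpa using h)
  obtain ⟨e⟩ : Nonempty (D ≃ Fin n × (ℚ ⊕ ℤ)) := nonempty_equiv_of_countable
  refine ⟨SorgCopy e, closed_SorgCopy e, ⟨Homeomorph.symm
    ⟨PhiEquiv e, (continuous_Phi e).subtype_mk _, continuous_PhiEquiv_symm e⟩⟩⟩
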